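/- Let A be a positive definite n×n complex matrix. Then inf{ τ(A·X) : X positive definite with det X ≥ 1 } = (det A)^{1/n}, where τ is the normalized trace. -/

import Mathlib

open Matrix Finset
open scoped ComplexOrder
open scoped MatrixOrder

-- trace of a Hermitian matrix equals sum of eigenvalues
lemma trace_eq_sum_eigs {n : ℕ} {M : Matrix (Fin n) (Fin n) ℂ} (hM : M.IsHermitian) :
    M.trace = ∑ i, (hM.eigenvalues i : ℂ) := by
  exact hM.trace_eq_sum_eigenvalues

-- AM-GM for positive semidefinite matrices
lemma amgm_psd {n : ℕ} (hn : 0 < n) {M : Matrix (Fin n) (Fin n) ℂ} (hM : M.PosSemidef) :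
    ‖M.det‖ ^ ((n : ℝ)⁻¹) ≤ (M.trace).re / n := by
  have hnR : (0:ℝ) < n := Nat.cast_pos.mpr hn
  set μ := hM.1.eigenvalues with hμ
  have hμ0 : ∀ i, 0 ≤ μ i := fun i => hM.eigenvalues_nonneg i
  have hdet : ‖M.det‖ = ∏ i, μ i := by
    rw [hM.1.det_eq_prod_eigenvalues, norm_prod]
    exact Finset.prod_congr rfl fun i _ => by
      rw [show (RCLike.ofReal (μ i) : ℂ) = ((μ i : ℝ) : ℂ) from rfl,
        Complex.norm_of_nonneg (hμ0 i)]
  have htr : (M.trace).re = ∑ i, μ i := by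
    rw [trace_eq_sum_eigs hM.1]
    simp [hμ]
  rw [hdet, htr]
  have amgm := Real.geom_mean_le_arith_mean_weighted Finset.univ
      (fun _ : Fin n => (n : ℝ)⁻¹) μ (fun i _ => by positivity)
      (by simp [Finset.card_univ]; field_simp) (fun i _ => hμ0 i)
  calc (∏ i, μ i) ^ ((n:ℝ)⁻¹) = ∏ i, μ i ^ ((n:ℝ)⁻¹) :=
        (Real.finset_prod_rpow _ _ (fun i _ => hμ0 i) _).symm
    _ ≤ ∑ i, (n:ℝ)⁻¹ * μ i := amgm
    _ = (∑ i, μ i) / n := by rw [← Finset.mul_sum]; ring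

lemma posDef_real_smul {n : ℕ} {M : Matrix (Fin n) (Fin n) ℂ} (hM : M.PosDef)
    {c : ℝ} (hc : 0 < c) : ((c:ℂ) • M).PosDef := by
  refine PosDef.of_dotProduct_mulVec_pos ?_ ?_
  · show ((c:ℂ) • M)ᴴ = _
    rw [conjTranspose_smul, Complex.star_def, Complex.conj_ofReal, hM.1.eq]
  · intro x hx
    have h1 := hM.dotProduct_mulVec_pos hx
    have h2 : (0:ℂ) < (c:ℂ) := by exact_mod_cast hc
    calc (0:ℂ) < (c:ℂ) * (star x ⬝ᵥ M *ᵥ x) := mul_pos h2 h1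
      _ = star x ⬝ᵥ ((c:ℂ) • M) *ᵥ x := by
          rw [smul_mulVec, dotProduct_smul, smul_eq_mul]

/-- Arveson's determinant formula in the finite-dimensional case: for a
positive definite `A ∈ M_n(ℂ)`,
`inf { τ(A·X) : X positive definite, det X ≥ 1 } = (det A)^{1/n}`,
where `τ` is the normalized trace.  (For positive definite matrices the
determinant and the trace are positive reals.) -/
theorem inf_normalized_trace_mul_posdef (n : ℕ) (hn : 0 < n)
    (A : Matrix (Fin n) (Fin n) ℂ) (hA : A.PosDef) :
    sInf {t : ℝ | ∃ X : Matrix (Fin n) (Fin n) ℂ, X.PosDef ∧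
        1 ≤ ‖X.det‖ ∧ t = (Matrix.trace (A * X)).re / n} =
      ‖A.det‖ ^ ((n : ℝ)⁻¹) := by
  have hnR : (0:ℝ) < n := Nat.cast_pos.mpr hn
  set d : ℝ := ‖A.det‖ with hdDef
  have hd : 0 < d := norm_pos_iff.mpr hA.det_pos.ne'
  set δ : ℝ := d ^ ((n:ℝ)⁻¹) with hδDef
  have hδ : 0 < δ := Real.rpow_pos_of_pos hd _
  have hδn : δ ^ n = d := Real.rpow_inv_natCast_pow hd.le hn.ne' 
  -- the witness X₀
  set X₀ : Matrix (Fin n) (Fin n) ℂ := (δ:ℂ) • A⁻¹ with hX₀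
  have hX₀pd : X₀.PosDef := posDef_real_smul hA.inv hδ
  have hdetX₀ : ‖X₀.det‖ = 1 := by
    rw [hX₀, det_smul, Matrix.det_nonsing_inv, norm_mul, norm_pow, Ring.inverse_eq_inv,
      norm_inv]
    rw [show ‖(δ:ℂ)‖ = δ from by
      rw [Complex.norm_of_nonneg hδ.le]]
    rw [Fintype.card_fin, hδn, ← hdDef]
    field_simp
  have htrX₀ : (Matrix.trace (A * X₀)).re / n = δ := by
    rw [hX₀, mul_smul_comm, trace_smul, Matrix.mul_nonsing_inv A hA.det_pos.ne'.isUnit,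
      trace_one]
    have : ((δ:ℂ) • (Fintype.card (Fin n) : ℂ)) = ((δ * n : ℝ) : ℂ) := by
      push_cast
      simp [smul_eq_mul]
    rw [this, Complex.ofReal_re]
    field_simp
  -- lower bound
  have hlb : ∀ t ∈ {t : ℝ | ∃ X : Matrix (Fin n) (Fin n) ℂ, X.PosDef ∧
      1 ≤ ‖X.det‖ ∧ t = (Matrix.trace (A * X)).re / n}, δ ≤ t := by
    rintro t ⟨X, hX, hXdet, rfl⟩
    set S := CFC.sqrt X with hS
    have hSps : S.PosSemidef := (CFC.sqrt_nonneg X).posSemidef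
    have hSherm : Sᴴ = S := hSps.1
    have hSS : S * S = X := CFC.sqrt_mul_sqrt_self X hX.posSemidef.nonneg
    have hMpsd : (S * A * S).PosSemidef := by
      have := hA.posSemidef.conjTranspose_mul_mul_same S
      rwa [hSherm] at this
    have htr : Matrix.trace (A * X) = Matrix.trace (S * A * S) := by
      rw [← hSS, ← Matrix.mul_assoc, Matrix.trace_mul_cycle]
    have hdetM : ‖(S * A * S).det‖ = ‖X.det‖ * d := by
      rw [det_mul, det_mul, ← hSS, det_mul, norm_mul, norm_mul, norm_mul]
      ring
    have h1 : δ ≤ ‖(S * A * S).det‖ ^ ((n:ℝ)⁻¹) := by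
      apply Real.rpow_le_rpow hd.le _ (by positivity)
      rw [hdetM]
      nlinarith [hd, hXdet]
    have h2 := amgm_psd hn hMpsd
    rw [htr]
    exact h1.trans h2
  apply le_antisymm
  · apply csInf_le ⟨δ, hlb⟩
    exact ⟨X₀, hX₀pd, le_of_eq hdetX₀.symm, htrX₀.symm⟩
  · exact le_csInf ⟨δ, X₀, hX₀pd, le_of_eq hdetX₀.symm, htrX₀.symm⟩ hlb
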